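/- Let v₀, p₀, ϰ ∈ ℝ, let I be an open interval containing v₀, and let g, θ, η, ε, m : I → ℝ be three times continuously differentiable with g(v₀) = p₀, θ(v₀) = θ₀ > 0, g'(v₀) < 0, and m(v) > 0 for all v ∈ I. Assume: (i) (v − v₀)·m(v) = −(g(v) − p₀) for all v ∈ I (so m(v₀) = −g'(v₀) plays the role of the squared mass flux ℳ²); (ii) the Gibbs identity along the curve: ε'(v) = θ(v)·η'(v) − g(v) for all v ∈ I; (iii) the Hugoniot identity: ε(v) − ε(v₀) + (1/2)(g(v) + p₀)(v − v₀) − (ϰ²/2)·(θ(v)² − θ₀²)/m(v) = 0 for all v ∈ I. Define Ψ(v) = η(v) − η(v₀) − (ϰ²/m(v))·(θ(v) − θ₀). Then Ψ'(v₀) = 0, Ψ''(v₀) = 0, and Ψ'''(v₀) = −(1/(2θ₀))·(1 + ϰ²·θ'(v₀)²/g'(v₀)²)·g''(v₀). -/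

import Mathlib

lemma derivEqOn' {f h : ℝ → ℝ} {s : Set ℝ} (hs : IsOpen s) (hfh : Set.EqOn f h s)
    {x : ℝ} (hx : x ∈ s) : deriv f x = deriv h x :=
  Filter.EventuallyEq.deriv_eq (Filter.eventuallyEq_of_mem (hs.mem_nhds hx) hfh)

/-- Second-order contact of the entropy-production function `Ψ` with `0` at the center of the
Hugoniot curve: under the mass-flux relation, the Gibbs identity and the Hugoniot identity
along the curve, `Ψ'(v₀) = Ψ''(v₀) = 0` and
`Ψ'''(v₀) = −(1/(2θ₀))(1 + ϰ²θ'(v₀)²/g'(v₀)²)·g''(v₀)`. -/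
theorem stmt_16 (v₀ p₀ ϰ θ₀ a b : ℝ) (hI : v₀ ∈ Set.Ioo a b)
    (g θ η ε m : ℝ → ℝ)
    (hg : ContDiffOn ℝ 3 g (Set.Ioo a b)) (hθ : ContDiffOn ℝ 3 θ (Set.Ioo a b))
    (hη : ContDiffOn ℝ 3 η (Set.Ioo a b)) (hε : ContDiffOn ℝ 3 ε (Set.Ioo a b))
    (hm : ContDiffOn ℝ 3 m (Set.Ioo a b))
    (hg0 : g v₀ = p₀) (hθ0 : θ v₀ = θ₀) (hθ0pos : 0 < θ₀)
    (hg' : deriv g v₀ < 0) (hmpos : ∀ v ∈ Set.Ioo a b, 0 < m v)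
    (hmass : ∀ v ∈ Set.Ioo a b, (v - v₀) * m v = -(g v - p₀))
    (hGibbs : ∀ v ∈ Set.Ioo a b, deriv ε v = θ v * deriv η v - g v)
    (hHug : ∀ v ∈ Set.Ioo a b, ε v - ε v₀ + (1 / 2) * (g v + p₀) * (v - v₀)
      - (ϰ ^ 2 / 2) * ((θ v) ^ 2 - θ₀ ^ 2) / m v = 0) :
    deriv (fun v => η v - η v₀ - (ϰ ^ 2 / m v) * (θ v - θ₀)) v₀ = 0 ∧
    iteratedDeriv 2 (fun v => η v - η v₀ - (ϰ ^ 2 / m v) * (θ v - θ₀)) v₀ = 0 ∧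
    iteratedDeriv 3 (fun v => η v - η v₀ - (ϰ ^ 2 / m v) * (θ v - θ₀)) v₀
      = -(1 / (2 * θ₀)) * (1 + ϰ ^ 2 * (deriv θ v₀) ^ 2 / (deriv g v₀) ^ 2)
        * iteratedDeriv 2 g v₀ := by
  have hs : IsOpen (Set.Ioo a b) := isOpen_Ioo
  set s : Set ℝ := Set.Ioo a b with hsdef
  have hne : ∀ v ∈ s, m v ≠ 0 := fun v hv => (hmpos v hv).ne'
  -- differentiability at points
  have hdg : ∀ v ∈ s, DifferentiableAt ℝ g v := fun v hv =>
    (hg.differentiableOn (by norm_num)).differentiableAt (hs.mem_nhds hv)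
  have hdθ : ∀ v ∈ s, DifferentiableAt ℝ θ v := fun v hv =>
    (hθ.differentiableOn (by norm_num)).differentiableAt (hs.mem_nhds hv)
  have hdη : ∀ v ∈ s, DifferentiableAt ℝ η v := fun v hv =>
    (hη.differentiableOn (by norm_num)).differentiableAt (hs.mem_nhds hv)
  have hdε : ∀ v ∈ s, DifferentiableAt ℝ ε v := fun v hv =>
    (hε.differentiableOn (by norm_num)).differentiableAt (hs.mem_nhds hv)
  have hdm : ∀ v ∈ s, DifferentiableAt ℝ m v := fun v hv =>
    (hm.differentiableOn (by norm_num)).differentiableAt (hs.mem_nhds hv)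
  have hg2 : ContDiffOn ℝ 2 (deriv g) s := hg.deriv_of_isOpen hs (by norm_num)
  have hθ2 : ContDiffOn ℝ 2 (deriv θ) s := hθ.deriv_of_isOpen hs (by norm_num)
  have hm2 : ContDiffOn ℝ 2 (deriv m) s := hm.deriv_of_isOpen hs (by norm_num)
  have hdg' : ∀ v ∈ s, DifferentiableAt ℝ (deriv g) v := fun v hv =>
    (hg2.differentiableOn (by norm_num)).differentiableAt (hs.mem_nhds hv)
  have hdθ' : ∀ v ∈ s, DifferentiableAt ℝ (deriv θ) v := fun v hv =>
    (hθ2.differentiableOn (by norm_num)).differentiableAt (hs.mem_nhds hv)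
  have hdm' : ∀ v ∈ s, DifferentiableAt ℝ (deriv m) v := fun v hv =>
    (hm2.differentiableOn (by norm_num)).differentiableAt (hs.mem_nhds hv)
  have hg3 : ContDiffOn ℝ 1 (deriv (deriv g)) s := hg2.deriv_of_isOpen hs (by norm_num)
  have hθ3 : ContDiffOn ℝ 1 (deriv (deriv θ)) s := hθ2.deriv_of_isOpen hs (by norm_num)
  have hm3 : ContDiffOn ℝ 1 (deriv (deriv m)) s := hm2.deriv_of_isOpen hs (by norm_num)
  have hdg'' : ∀ v ∈ s, DifferentiableAt ℝ (deriv (deriv g)) v := fun v hv =>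
    (hg3.differentiableOn (by norm_num)).differentiableAt (hs.mem_nhds hv)
  have hdθ'' : ∀ v ∈ s, DifferentiableAt ℝ (deriv (deriv θ)) v := fun v hv =>
    (hθ3.differentiableOn (by norm_num)).differentiableAt (hs.mem_nhds hv)
  have hdm'' : ∀ v ∈ s, DifferentiableAt ℝ (deriv (deriv m)) v := fun v hv =>
    (hm3.differentiableOn (by norm_num)).differentiableAt (hs.mem_nhds hv)
  -- Ψ and its smoothness
  set Ψ : ℝ → ℝ := fun v => η v - η v₀ - (ϰ ^ 2 / m v) * (θ v - θ₀) with hΨdef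
  have hΨ : ContDiffOn ℝ 3 Ψ s :=
    (hη.sub contDiffOn_const).sub ((contDiffOn_const.div hm hne).mul (hθ.sub contDiffOn_const))
  have hdΨ : ∀ v ∈ s, DifferentiableAt ℝ Ψ v := fun v hv =>
    (hΨ.differentiableOn (by norm_num)).differentiableAt (hs.mem_nhds hv)
  have hΨ2 : ContDiffOn ℝ 2 (deriv Ψ) s := hΨ.deriv_of_isOpen hs (by norm_num)
  have hdΨ' : ∀ v ∈ s, DifferentiableAt ℝ (deriv Ψ) v := fun v hv =>
    (hΨ2.differentiableOn (by norm_num)).differentiableAt (hs.mem_nhds hv)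
  have hΨ3 : ContDiffOn ℝ 1 (deriv (deriv Ψ)) s := hΨ2.deriv_of_isOpen hs (by norm_num)
  have hdΨ'' : ∀ v ∈ s, DifferentiableAt ℝ (deriv (deriv Ψ)) v := fun v hv =>
    (hΨ3.differentiableOn (by norm_num)).differentiableAt (hs.mem_nhds hv)
  -- generic derivative of Ψ
  have hΨd : ∀ v ∈ s, deriv Ψ v = deriv η v -
      (((0 * m v - ϰ ^ 2 * deriv m v) / m v ^ 2) * (θ v - θ₀) + (ϰ ^ 2 / m v) * deriv θ v) := by
    intro v hv
    have h1 : HasDerivAt (fun w => ϰ ^ 2 / m w) ((0 * m v - ϰ ^ 2 * deriv m v) / m v ^ 2) v :=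
      (hasDerivAt_const v (ϰ ^ 2)).div (hdm v hv).hasDerivAt (hne v hv)
    have h2 : HasDerivAt Ψ (deriv η v -
        (((0 * m v - ϰ ^ 2 * deriv m v) / m v ^ 2) * (θ v - θ₀) + (ϰ ^ 2 / m v) * deriv θ v)) v :=
      (((hdη v hv).hasDerivAt).sub_const (η v₀)).sub
        (h1.mul (((hdθ v hv).hasDerivAt).sub_const θ₀))
    exact h2.deriv
  -- A and the key identity  θ·Ψ' = A/2 on s
  set A : ℝ → ℝ := fun v =>
    g v - p₀ - deriv g v * (v - v₀) + ϰ ^ 2 * (θ v - θ₀) ^ 2 * deriv m v / m v ^ 2 with hAdef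
  have hkey : ∀ v ∈ s, θ v * deriv Ψ v = A v / 2 := by
    intro v hv
    -- derivative of the Hugoniot function is zero
    have hH0 : Set.EqOn (fun w => ε w - ε v₀ + (1 / 2) * (g w + p₀) * (w - v₀)
        - (ϰ ^ 2 / 2) * ((θ w) ^ 2 - θ₀ ^ 2) / m w) (fun _ => (0 : ℝ)) s := fun w hw => hHug w hw
    have hHd : HasDerivAt (fun w => ε w - ε v₀ + (1 / 2) * (g w + p₀) * (w - v₀)
        - (ϰ ^ 2 / 2) * ((θ w) ^ 2 - θ₀ ^ 2) / m w)
        (deriv ε v + ((1 / 2) * deriv g v * (v - v₀) + (1 / 2) * (g v + p₀) * 1)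
          - (((ϰ ^ 2 / 2) * ((2 : ℕ) * θ v ^ 1 * deriv θ v)) * m v
              - (ϰ ^ 2 / 2) * ((θ v) ^ 2 - θ₀ ^ 2) * deriv m v) / m v ^ 2) v := by
      refine (((((hdε v hv).hasDerivAt).sub_const (ε v₀)).add ?_).sub ?_)
      · exact (HasDerivAt.const_mul (1 / 2) (((hdg v hv).hasDerivAt).add_const p₀)).mul
          ((hasDerivAt_id v).sub_const v₀)
      · exact (HasDerivAt.const_mul (ϰ ^ 2 / 2)
          ((((hdθ v hv).hasDerivAt).pow 2).sub_const (θ₀ ^ 2))).div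
          ((hdm v hv).hasDerivAt) (hne v hv)
    have e1 : deriv ε v + ((1 / 2) * deriv g v * (v - v₀) + (1 / 2) * (g v + p₀) * 1)
          - (((ϰ ^ 2 / 2) * ((2 : ℕ) * θ v ^ 1 * deriv θ v)) * m v
              - (ϰ ^ 2 / 2) * ((θ v) ^ 2 - θ₀ ^ 2) * deriv m v) / m v ^ 2 = 0 := by
      rw [← hHd.deriv]
      rw [derivEqOn' hs hH0 hv]
      exact deriv_const v 0
    rw [hGibbs v hv] at e1
    rw [hΨd v hv, hAdef]
    have hmv := hne v hv
    field_simp at e1 ⊢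
    linear_combination e1
  -- mass flux facts: m v₀ = -g'(v₀), 2 m'(v₀) = -g''(v₀)
  have hmassd : ∀ v ∈ s, 1 * m v + (v - v₀) * deriv m v = -deriv g v := by
    intro v hv
    have h1 : HasDerivAt (fun w => (w - v₀) * m w) (1 * m v + (v - v₀) * deriv m v) v :=
      ((hasDerivAt_id v).sub_const v₀).mul (hdm v hv).hasDerivAt
    have h2 : HasDerivAt (fun w => -(g w - p₀)) (-deriv g v) v :=
      (((hdg v hv).hasDerivAt).sub_const p₀).neg
    rw [← h1.deriv, ← h2.deriv]
    exact derivEqOn' hs (fun w hw => hmass w hw) hv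
  have hm0 : m v₀ = -deriv g v₀ := by
    have := hmassd v₀ hI; simpa using this
  have hm1 : 2 * deriv m v₀ = -deriv (deriv g) v₀ := by
    have h1 : HasDerivAt (fun v => 1 * m v + (v - v₀) * deriv m v)
        (1 * deriv m v₀ + (1 * deriv m v₀ + (v₀ - v₀) * deriv (deriv m) v₀)) v₀ :=
      (HasDerivAt.const_mul 1 (hdm v₀ hI).hasDerivAt).add
        ((((hasDerivAt_id v₀).sub_const v₀).mul (hdm' v₀ hI).hasDerivAt))
    have h2 : HasDerivAt (fun v => -deriv g v) (-deriv (deriv g) v₀) v₀ :=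
      ((hdg' v₀ hI).hasDerivAt).neg
    have h3 : deriv (fun v => 1 * m v + (v - v₀) * deriv m v) v₀
        = deriv (fun v => -deriv g v) v₀ := derivEqOn' hs hmassd hI
    rw [h1.deriv, h2.deriv] at h3
    simpa using by linarith [h3]
  -- Ψ'(v₀) = 0
  have hθ0ne : θ₀ ≠ 0 := hθ0pos.ne'
  have hA0 : A v₀ = 0 := by
    rw [hAdef]; simp [hg0, hθ0]
  have hΨ'0 : deriv Ψ v₀ = 0 := by
    have h := hkey v₀ hI
    rw [hA0, hθ0] at h
    have h2 : θ₀ * deriv Ψ v₀ = 0 := by simpa using h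
    exact (mul_eq_zero.mp h2).resolve_left hθ0ne
  -- W : the smooth cofactor in deriv A
  set W : ℝ → ℝ := fun v => (2 * deriv θ v * deriv m v * m v ^ 2
      + (θ v - θ₀) * deriv (deriv m) v * m v ^ 2
      - (θ v - θ₀) * deriv m v * (2 * m v) * deriv m v) / m v ^ 4 with hWdef
  have hWc : ContDiffOn ℝ 1 W s := by
    rw [hWdef]
    exact ((((contDiffOn_const.mul (hθ2.of_le (by norm_num))).mul (hm2.of_le (by norm_num))).mul
        ((hm.of_le (by norm_num)).pow 2)).add
      ((((hθ.of_le (by norm_num)).sub contDiffOn_const).mul hm3).mul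
        ((hm.of_le (by norm_num)).pow 2)) |>.sub
      (((((hθ.of_le (by norm_num)).sub contDiffOn_const).mul (hm2.of_le (by norm_num))).mul
        (contDiffOn_const.mul (hm.of_le (by norm_num)))).mul (hm2.of_le (by norm_num)))).div
      ((hm.of_le (by norm_num)).pow 4) (fun v hv => pow_ne_zero 4 (hne v hv))
  have hdW : DifferentiableAt ℝ W v₀ :=
    (hWc.differentiableOn (by norm_num)).differentiableAt (hs.mem_nhds hI)
  have hW0 : W v₀ = 2 * deriv θ v₀ * deriv m v₀ / m v₀ ^ 2 := by
    rw [hWdef]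
    simp only [hθ0, sub_self, zero_mul, mul_zero, add_zero, sub_zero]
    rw [show m v₀ ^ 4 = m v₀ ^ 2 * m v₀ ^ 2 by ring, ← div_div]
    rw [mul_div_assoc, div_self (pow_ne_zero 2 (hne v₀ hI))]
    ring
  -- generic derivative of A
  have hAd : ∀ v ∈ s, deriv A v
      = -(deriv (deriv g) v * (v - v₀)) + ϰ ^ 2 * (θ v - θ₀) * W v := by
    intro v hv
    have raw : HasDerivAt (fun w : ℝ =>
        g w - p₀ - deriv g w * (w - v₀) + ϰ ^ 2 * (θ w - θ₀) ^ 2 * deriv m w / m w ^ 2)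
        ((deriv g v - (deriv (deriv g) v * (v - v₀) + deriv g v * 1))
          + (((ϰ ^ 2 * ((2 : ℕ) * (θ v - θ₀) ^ 1 * deriv θ v)) * deriv m v
                + ϰ ^ 2 * (θ v - θ₀) ^ 2 * deriv (deriv m) v) * m v ^ 2
              - ϰ ^ 2 * (θ v - θ₀) ^ 2 * deriv m v * ((2 : ℕ) * m v ^ 1 * deriv m v))
            / (m v ^ 2) ^ 2) v := by
      refine HasDerivAt.add ?_ ?_
      · exact (((hdg v hv).hasDerivAt).sub_const p₀).sub
          (((hdg' v hv).hasDerivAt).mul ((hasDerivAt_id v).sub_const v₀))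
      · exact ((HasDerivAt.const_mul (ϰ ^ 2)
            ((((hdθ v hv).hasDerivAt).sub_const θ₀).pow 2)).mul
            ((hdm' v hv).hasDerivAt)).div
          (((hdm v hv).hasDerivAt).pow 2) (pow_ne_zero 2 (hne v hv))
    have hAv : HasDerivAt A
        (-(deriv (deriv g) v * (v - v₀)) + ϰ ^ 2 * (θ v - θ₀) * W v) v := by
      rw [hAdef]
      convert raw using 1
      rw [hWdef]
      have hmv := hne v hv
      push_cast
      field_simp
      ring
    exact hAv.deriv
  -- Ψ''(v₀) = 0
  have hA'0 : deriv A v₀ = 0 := by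
    rw [hAd v₀ hI, hθ0]; simp
  have hΨ''0 : deriv (deriv Ψ) v₀ = 0 := by
    have hLR : deriv (fun w => θ w * deriv Ψ w) v₀ = deriv (fun w => A w / 2) v₀ :=
      derivEqOn' hs (fun v hv => hkey v hv) hI
    have hL : deriv (fun w => θ w * deriv Ψ w) v₀
        = deriv θ v₀ * deriv Ψ v₀ + θ v₀ * deriv (deriv Ψ) v₀ :=
      (((hdθ v₀ hI).hasDerivAt).mul ((hdΨ' v₀ hI).hasDerivAt)).deriv
    rw [hL, deriv_div_const, hA'0, hΨ'0, hθ0] at hLR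
    simp at hLR
    rcases hLR with h | h
    · exact absurd h hθ0ne
    · exact h
  -- third derivative
  set L₁ : ℝ → ℝ := fun v => deriv θ v * deriv Ψ v + θ v * deriv (deriv Ψ) v with hL₁def
  set R₂ : ℝ → ℝ := fun v =>
    (-(deriv (deriv g) v * (v - v₀)) + ϰ ^ 2 * (θ v - θ₀) * W v) / 2 with hR₂def
  have hEq3 : Set.EqOn L₁ R₂ s := by
    intro v hv
    have hL : deriv (fun w => θ w * deriv Ψ w) v
        = deriv θ v * deriv Ψ v + θ v * deriv (deriv Ψ) v :=
      (((hdθ v hv).hasDerivAt).mul ((hdΨ' v hv).hasDerivAt)).deriv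
    have hLR : deriv (fun w => θ w * deriv Ψ w) v = deriv (fun w => A w / 2) v :=
      derivEqOn' hs (fun w hw => hkey w hw) hv
    have : L₁ v = deriv A v / 2 := by
      rw [hL₁def]
      simp only
      rw [← hL, hLR, deriv_div_const]
    rw [this, hR₂def, hAd v hv]
  have hD3 : deriv L₁ v₀ = deriv R₂ v₀ := derivEqOn' hs hEq3 hI
  have hL3 : HasDerivAt L₁
      ((deriv (deriv θ) v₀ * deriv Ψ v₀ + deriv θ v₀ * deriv (deriv Ψ) v₀)
        + (deriv θ v₀ * deriv (deriv Ψ) v₀ + θ v₀ * deriv (deriv (deriv Ψ)) v₀)) v₀ := by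
    rw [hL₁def]
    exact (((hdθ' v₀ hI).hasDerivAt).mul ((hdΨ' v₀ hI).hasDerivAt)).add
      (((hdθ v₀ hI).hasDerivAt).mul ((hdΨ'' v₀ hI).hasDerivAt))
  have hR3 : HasDerivAt R₂
      ((-(deriv (deriv (deriv g)) v₀ * (v₀ - v₀) + deriv (deriv g) v₀ * 1)
        + ((ϰ ^ 2 * deriv θ v₀) * W v₀ + (ϰ ^ 2 * (θ v₀ - θ₀)) * deriv W v₀)) / 2) v₀ := by
    rw [hR₂def]
    exact (((((hdg'' v₀ hI).hasDerivAt).mul ((hasDerivAt_id v₀).sub_const v₀)).neg).add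
      ((HasDerivAt.const_mul (ϰ ^ 2) (((hdθ v₀ hI).hasDerivAt).sub_const θ₀)).mul
        hdW.hasDerivAt)).div_const 2
  have E : (deriv (deriv θ) v₀ * deriv Ψ v₀ + deriv θ v₀ * deriv (deriv Ψ) v₀)
        + (deriv θ v₀ * deriv (deriv Ψ) v₀ + θ v₀ * deriv (deriv (deriv Ψ)) v₀)
      = (-(deriv (deriv (deriv g)) v₀ * (v₀ - v₀) + deriv (deriv g) v₀ * 1)
        + ((ϰ ^ 2 * deriv θ v₀) * W v₀ + (ϰ ^ 2 * (θ v₀ - θ₀)) * deriv W v₀)) / 2 := by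
    rw [← hL3.deriv, ← hR3.deriv]; exact hD3
  rw [hΨ'0, hΨ''0, hθ0, hW0, hm0, sub_self] at E
  have hg1ne : deriv g v₀ ≠ 0 := ne_of_lt hg'
  have hm1' : deriv m v₀ = -deriv (deriv g) v₀ / 2 := by linarith
  rw [hm1'] at E
  have hΨ'''0 : deriv (deriv (deriv Ψ)) v₀
      = -(1 / (2 * θ₀)) * (1 + ϰ ^ 2 * (deriv θ v₀) ^ 2 / (deriv g v₀) ^ 2)
        * deriv (deriv g) v₀ := by
    apply mul_left_cancel₀ hθ0ne
    have E' : θ₀ * deriv (deriv (deriv Ψ)) v₀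
        = (-deriv (deriv g) v₀
          + ϰ ^ 2 * deriv θ v₀ * (2 * deriv θ v₀ * (-deriv (deriv g) v₀ / 2)
              / (-deriv g v₀) ^ 2)) / 2 := by
      linear_combination E
    rw [E']
    field_simp
    ring
  have hit2 : iteratedDeriv 2 Ψ = deriv (deriv Ψ) := by
    rw [show (2 : ℕ) = 1 + 1 from rfl, iteratedDeriv_succ, iteratedDeriv_one]
  have hit3 : iteratedDeriv 3 Ψ = deriv (deriv (deriv Ψ)) := by
    rw [show (3 : ℕ) = 2 + 1 from rfl, iteratedDeriv_succ, hit2]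
  have hitg : iteratedDeriv 2 g = deriv (deriv g) := by
    rw [show (2 : ℕ) = 1 + 1 from rfl, iteratedDeriv_succ, iteratedDeriv_one]
  exact ⟨hΨ'0, by rw [hit2]; exact hΨ''0, by rw [hit3, hitg]; exact hΨ'''0⟩
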